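/- Let λ, μ be closed Lagrangian subspaces forming a Fredholm pair. Then the kernel of q_λ(μ) = Id − τ_μ∘τ_λ equals (λ∩μ) + J(λ∩μ), which is complex-linearly isomorphic to the complexification (λ∩μ) ⊗ ℂ. -/

import Mathlib

open Module RealInnerProductSpace

variable {H : Type*} [NormedAddCommGroup H] [InnerProductSpace ℝ H] [CompleteSpace H]

/-- A closed Lagrangian subspace of the real symplectic Hilbert space `H` with symplectic
form `ω(x,y) = ⟪J x, y⟫`: a closed subspace which equals its own `ω`-annihilator. -/
def IsLagrangian (J : H →L[ℝ] H) (lam : Submodule ℝ H) : Prop :=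
  IsClosed (lam : Set H) ∧ ∀ x : H, x ∈ lam ↔ ∀ y ∈ lam, ⟪J x, y⟫ = 0

/-- The pair `(lam, mu)` is a Fredholm pair of subspaces. -/
def IsFredholmPair (lam mu : Submodule ℝ H) : Prop :=
  FiniteDimensional ℝ ↥(lam ⊓ mu) ∧ IsClosed ((lam ⊔ mu : Submodule ℝ H) : Set H) ∧
    FiniteDimensional ℝ (H ⧸ (lam ⊔ mu))

/-- A bounded real-linear operator is Fredholm. -/
def IsFredholmR (T : H →L[ℝ] H) : Prop :=
  FiniteDimensional ℝ (LinearMap.ker (T : H →ₗ[ℝ] H)) ∧ IsClosed (LinearMap.range (T : H →ₗ[ℝ] H) : Set H) ∧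
    FiniteDimensional ℝ (H ⧸ LinearMap.range (T : H →ₗ[ℝ] H))

/-- The orthogonal projection onto a closed subspace, as an operator `H → H`. -/
noncomputable def projCLM (lam : Submodule ℝ H) [CompleteSpace lam] : H →L[ℝ] H :=
  lam.subtypeL.comp (lam.orthogonalProjectionOnto)

/-- The conjugation `τ_λ = 2P(λ) − Id` determined by the real structure `λ`. -/
noncomputable def conjOf (lam : Submodule ℝ H) [CompleteSpace lam] : H →L[ℝ] H :=
  (2 : ℝ) • projCLM lam - 1

lemma projCLM_mem (nu : Submodule ℝ H) [CompleteSpace nu] (x : H) : projCLM nu x ∈ nu :=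
  (nu.orthogonalProjectionOnto x).2

lemma projCLM_eq_self (nu : Submodule ℝ H) [CompleteSpace nu] {x : H} (hx : x ∈ nu) :
    projCLM nu x = x :=
  (Submodule.starProjection_eq_self_iff (K := nu)).mpr hx

lemma projCLM_eq_zero (nu : Submodule ℝ H) [CompleteSpace nu] {x : H} (hx : x ∈ nuᗮ) :
    projCLM nu x = 0 := by
  have := Submodule.orthogonalProjectionOnto_apply_of_mem_orthogonal hx
  simp [projCLM, this]

lemma sub_projCLM_mem (nu : Submodule ℝ H) [CompleteSpace nu] (x : H) :
    x - projCLM nu x ∈ nuᗮ :=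
  Submodule.sub_starProjection_mem_orthogonal (K := nu) x

lemma conjOf_apply (nu : Submodule ℝ H) [CompleteSpace nu] (x : H) :
    conjOf nu x = (2 : ℝ) • projCLM nu x - x := by
  simp [conjOf]

lemma conjOf_conjOf (nu : Submodule ℝ H) [CompleteSpace nu] (x : H) :
    conjOf nu (conjOf nu x) = x := by
  rw [conjOf_apply, conjOf_apply, map_sub, map_smul,
    projCLM_eq_self nu (projCLM_mem nu x)]
  module

lemma mem_ker_q_iff (lam mu : Submodule ℝ H) [CompleteSpace lam] [CompleteSpace mu] (x : H) :
    x ∈ LinearMap.ker ((1 - conjOf mu ∘L conjOf lam : H →L[ℝ] H) : H →ₗ[ℝ] H) ↔ projCLM lam x = projCLM mu x := by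
  have h1 : x ∈ LinearMap.ker ((1 - conjOf mu ∘L conjOf lam : H →L[ℝ] H) : H →ₗ[ℝ] H) ↔ conjOf mu (conjOf lam x) = x := by
    simp only [LinearMap.mem_ker, ContinuousLinearMap.coe_coe, ContinuousLinearMap.sub_apply,
      ContinuousLinearMap.one_apply, ContinuousLinearMap.comp_apply, sub_eq_zero]
    exact eq_comm
  have h2 : conjOf mu (conjOf lam x) = x ↔ conjOf lam x = conjOf mu x := by
    constructor
    · intro h
      have := congrArg (conjOf mu) h
      rwa [conjOf_conjOf] at this
    · intro h
      rw [h, conjOf_conjOf]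
  rw [h1, h2, conjOf_apply, conjOf_apply]
  constructor
  · intro h
    have h' : (2 : ℝ) • projCLM lam x = (2 : ℝ) • projCLM mu x := by
      have := sub_left_injective h
      linear_combination (norm := module) this
    exact smul_right_injective H two_ne_zero h'
  · intro h; rw [h]

/-- For closed Lagrangian subspaces `λ, μ` forming a Fredholm pair, the kernel of
`q_λ(μ) = Id − τ_μ∘τ_λ` equals `(λ∩μ) + J(λ∩μ)`, which is complex-linearly isomorphic to the
complexification `(λ∩μ) ⊗ ℂ` (identified with `(λ∩μ) × (λ∩μ)`, multiplication by `√−1`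
being `(x,y) ↦ (−y,x)` there and `J` on `H_J`). -/
theorem ker_q_eq_complexification
    (J : H →L[ℝ] H) (hJ2 : J ∘L J = -1)
    (hJorth : ∀ x y : H, ⟪J x, J y⟫ = ⟪x, y⟫)
    (lam mu : Submodule ℝ H) (hlam : IsLagrangian J lam) (hmu : IsLagrangian J mu)
    [CompleteSpace lam] [CompleteSpace mu]
    (hpair : IsFredholmPair lam mu) :
    LinearMap.ker ((1 - conjOf mu ∘L conjOf lam : H →L[ℝ] H) : H →ₗ[ℝ] H) =
        (lam ⊓ mu) ⊔ (lam ⊓ mu).map (J : H →ₗ[ℝ] H) ∧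
      ∃ e : (↥(lam ⊓ mu) × ↥(lam ⊓ mu)) ≃ₗ[ℝ]
          ↥(LinearMap.ker ((1 - conjOf mu ∘L conjOf lam : H →L[ℝ] H) : H →ₗ[ℝ] H)),
        (∀ p, (e p : H) = (p.1 : H) + J p.2) ∧
        (∀ p, (e (-p.2, p.1) : H) = J (e p)) := by
  have hJJ : ∀ x : H, J (J x) = -x := by
    intro x
    have := congrArg (fun T : H →L[ℝ] H => T x) hJ2
    simpa using this
  have hJinj : Function.Injective J := by
    intro x y h
    have := congrArg J h
    rw [hJJ, hJJ] at this
    exact neg_injective this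
  -- Lagrangian: J ν = νᗮ
  have hmap : ∀ (nu : Submodule ℝ H), IsLagrangian J nu →
      nu.map (J : H →ₗ[ℝ] H) = nuᗮ := by
    intro nu hnu
    ext z
    constructor
    · rintro ⟨x, hx, rfl⟩
      rw [Submodule.mem_orthogonal]
      intro u hu
      rw [real_inner_comm]
      exact (hnu.2 x).mp hx u hu
    · intro hz
      refine ⟨-(J z), (hnu.2 _).mpr fun y hy => ?_, by simp [hJJ]⟩
      have : J (-(J z)) = z := by simp [hJJ]
      rw [this, real_inner_comm]
      exact (Submodule.mem_orthogonal _ _).mp hz y hy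
  have hlamO := hmap lam hlam
  have hmuO := hmap mu hmu
  have hJinfl : (lam ⊓ mu).map (J : H →ₗ[ℝ] H) = lamᗮ ⊓ muᗮ := by
    rw [← hlamO, ← hmuO]
    exact Submodule.map_inf (J : H →ₗ[ℝ] H) hJinj
  -- the kernel equality
  have hK : LinearMap.ker ((1 - conjOf mu ∘L conjOf lam : H →L[ℝ] H) : H →ₗ[ℝ] H) =
      (lam ⊓ mu) ⊔ (lam ⊓ mu).map (J : H →ₗ[ℝ] H) := by
    apply le_antisymm
    · intro x hx
      rw [mem_ker_q_iff] at hx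
      have hp1 : projCLM lam x ∈ lam ⊓ mu :=
        Submodule.mem_inf.mpr ⟨projCLM_mem lam x, hx ▸ projCLM_mem mu x⟩
      have hp2 : x - projCLM lam x ∈ (lam ⊓ mu).map (J : H →ₗ[ℝ] H) := by
        rw [hJinfl]
        exact Submodule.mem_inf.mpr ⟨sub_projCLM_mem lam x, hx ▸ sub_projCLM_mem mu x⟩
      have := Submodule.add_mem_sup hp1 hp2
      simpa using this
    · apply sup_le
      · intro x hx
        rw [mem_ker_q_iff]
        rw [projCLM_eq_self lam hx.1, projCLM_eq_self mu hx.2]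
      · intro x hx
        rw [mem_ker_q_iff]
        rw [hJinfl] at hx
        rw [projCLM_eq_zero lam hx.1, projCLM_eq_zero mu hx.2]
  refine ⟨hK, ?_⟩
  -- the linear map
  have hmemK : ∀ p : (↥(lam ⊓ mu) × ↥(lam ⊓ mu)),
      (p.1 : H) + J p.2 ∈ LinearMap.ker ((1 - conjOf mu ∘L conjOf lam : H →L[ℝ] H) : H →ₗ[ℝ] H) := by
    intro p
    rw [hK]
    exact Submodule.add_mem_sup p.1.2 (Submodule.mem_map_of_mem p.2.2)
  set K := LinearMap.ker ((1 - conjOf mu ∘L conjOf lam : H →L[ℝ] H) : H →ₗ[ℝ] H) with hKdef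
  let f : (↥(lam ⊓ mu) × ↥(lam ⊓ mu)) →ₗ[ℝ] ↥K :=
    { toFun := fun p => ⟨(p.1 : H) + J p.2, hmemK p⟩
      map_add' := by
        intro p q
        apply Subtype.ext
        simp only [Prod.fst_add, Prod.snd_add, Submodule.coe_add, map_add,
          Submodule.coe_add]
        abel
      map_smul' := by
        intro c p
        apply Subtype.ext
        simp only [Prod.smul_fst, Prod.smul_snd, SetLike.val_smul, map_smul,
          RingHom.id_apply, smul_add] }
  have hf : ∀ p, ((f p : H)) = (p.1 : H) + J p.2 := fun _ => rfl
  have hJorthmem : ∀ (a b : ↥(lam ⊓ mu)), ⟪(a : H), J b⟫ = 0 := by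
    intro a b
    have hb : (J (b : H)) ∈ lamᗮ := hlamO ▸ ⟨(b : H), b.2.1, rfl⟩
    exact (Submodule.mem_orthogonal _ _).mp hb _ a.2.1
  have hinj : Function.Injective f := by
    rw [injective_iff_map_eq_zero]
    intro p hp
    have h0 : (p.1 : H) + J p.2 = 0 := congrArg Subtype.val hp
    have ha : (p.1 : H) = 0 := by
      have : ⟪(p.1 : H), (p.1 : H)⟫ = 0 := by
        have := congrArg (fun z => ⟪(p.1 : H), z⟫) h0
        simpa [inner_add_right, hJorthmem p.1 p.2] using this
      exact inner_self_eq_zero.mp this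
    have hb : J (p.2 : H) = 0 := by
      rw [ha, zero_add] at h0; exact h0
    have hb' : (p.2 : H) = 0 := hJinj (by simpa using hb)
    have : p = (0, 0) := by
      apply Prod.ext <;> apply Subtype.ext <;> simp [ha, hb']
    exact this
  have hsurj : Function.Surjective f := by
    rintro ⟨x, hx⟩
    have hx' : x ∈ (lam ⊓ mu) ⊔ (lam ⊓ mu).map (J : H →ₗ[ℝ] H) := by
      rw [← hK]; exact hx
    obtain ⟨u, hu, v, hv, hx2⟩ := Submodule.mem_sup.mp hx'
    obtain ⟨w, hw, rfl⟩ := hv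
    exact ⟨(⟨u, hu⟩, ⟨w, hw⟩), Subtype.ext hx2⟩
  refine ⟨LinearEquiv.ofBijective f ⟨hinj, hsurj⟩, fun p => rfl, ?_⟩
  intro p
  have h1 : ((LinearEquiv.ofBijective f ⟨hinj, hsurj⟩) (-p.2, p.1) : H) =
      (-(p.2 : H)) + J p.1 := rfl
  have h2 : ((LinearEquiv.ofBijective f ⟨hinj, hsurj⟩) p : H) = (p.1 : H) + J p.2 := rfl
  rw [h1, h2, map_add, hJJ]
  abel
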